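/- (Latyshev) Let A be a (not necessarily unital) associative algebra satisfying the identity a_1⋯a_n = a_{σ(1)}⋯a_{σ(n)} for some permutation σ ∈ S_n with σ(1) ≠ 1. Then for all k ≥ 1, all τ ∈ S_k, and all elements a_1,...,a_{k+n} ∈ A, one has a_1⋯a_{k+n} = a_{τ(1)}⋯a_{τ(k)} · a_{k+1}⋯a_{k+n}. -/

import Mathlib

/-- Product of a nonempty list in a (non-unital) multiplicative structure;
junk value `0` for the empty list. -/
def listMul {A : Type*} [Mul A] [Zero A] : List A → A
  | [] => 0
  | [x] => x
  | x :: y :: l => x * listMul (y :: l)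

/-- The product `a 0 * a 1 * ⋯ * a (k-1)`. -/
def finProd {A : Type*} [Mul A] [Zero A] {k : ℕ} (a : Fin k → A) : A :=
  listMul (List.ofFn a)

section Latyshev

variable {A : Type*} [NonUnitalRing A]

private lemma lm_cons (a : A) (l : List A) (hl : l ≠ []) :
    listMul (a :: l) = a * listMul l := by
  cases l with
  | nil => exact absurd rfl hl
  | cons b t => rfl

private lemma lm_append : ∀ (l : List A), l ≠ [] → ∀ (l' : List A), l' ≠ [] →
    listMul (l ++ l') = listMul l * listMul l'
  | [], h => absurd rfl h
  | [a], _ => fun l' hl' => by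
      rw [List.singleton_append, lm_cons a l' hl']; rfl
  | a :: b :: t, _ => fun l' hl' => by
      have ih := lm_append (b :: t) (by simp) l' hl'
      calc listMul ((a :: b :: t) ++ l') = listMul (a :: ((b :: t) ++ l')) := by simp
        _ = a * listMul ((b :: t) ++ l') := lm_cons _ _ (by simp)
        _ = a * (listMul (b :: t) * listMul l') := by rw [ih]
        _ = (a * listMul (b :: t)) * listMul l' := (mul_assoc _ _ _).symm
        _ = listMul (a :: b :: t) * listMul l' := by rw [← lm_cons a _ (by simp)]

private lemma lm_mulcons (a b : A) (l : List A) :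
    listMul ((a * b) :: l) = a * listMul (b :: l) := by
  cases l with
  | nil => rfl
  | cons c t =>
    rw [lm_cons (a * b) (c :: t) (by simp), lm_cons b (c :: t) (by simp), mul_assoc]

private lemma lm_split (a b : A) (w : List A) :
    listMul ((a * b) :: w) = listMul (a :: b :: w) := by
  rw [lm_mulcons, lm_cons a (b :: w) (by simp)]

private lemma lm_ctx {l l' : List A} (hl : l ≠ []) (hl' : l' ≠ [])
    (h : listMul l = listMul l') (u v : List A) :
    listMul (u ++ l ++ v) = listMul (u ++ l' ++ v) := by
  have hv : ∀ (w w' : List A), w ≠ [] → w' ≠ [] → listMul w = listMul w' →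
      listMul (w ++ v) = listMul (w' ++ v) := by
    intro w w' hw hw' hww
    cases v with
    | nil => simpa using hww
    | cons c t => rw [lm_append w hw _ (by simp), lm_append w' hw' _ (by simp), hww]
  induction u with
  | nil => simpa using hv l l' hl hl' h
  | cons a t ih =>
    have h1 : t ++ l ++ v ≠ [] := by simp [hl]
    have h2 : t ++ l' ++ v ≠ [] := by simp [hl']
    calc listMul ((a :: t) ++ l ++ v) = listMul (a :: (t ++ l ++ v)) := by simp
      _ = a * listMul (t ++ l ++ v) := lm_cons _ _ h1
      _ = a * listMul (t ++ l' ++ v) := by rw [ih]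
      _ = listMul (a :: (t ++ l' ++ v)) := (lm_cons _ _ h2).symm
      _ = listMul ((a :: t) ++ l' ++ v) := by simp

private lemma lm_glue (a b : A) (w u v : List A) :
    listMul (u ++ (a * b) :: w ++ v) = listMul (u ++ a :: b :: w ++ v) :=
  lm_ctx (by simp) (by simp) (lm_split a b w) u v

variable (n : ℕ) (σ : Equiv.Perm (Fin (n + 1)))
  (hσ : σ 0 ≠ 0)
  (hid : ∀ b : Fin (n + 1) → A, finProd b = finProd (fun i => b (σ i)))

section core
include hσ hid

private lemma lemD_core (c : A) (d : List A) (hd : d.length = n + 1) :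
    listMul (c :: d) =
      listMul (d.take ((σ 0 : Fin (n+1)) : ℕ) ++ c :: d.drop ((σ 0 : Fin (n+1)) : ℕ)) := by
  obtain ⟨dv, rfl⟩ : ∃ dv : Fin (n + 1) → A, d = List.ofFn dv := by
    refine ⟨fun i => d[(i : ℕ)]'(by rw [hd]; exact i.isLt), ?_⟩
    apply List.ext_getElem (by simp [hd])
    intro i h1 h2
    rw [List.getElem_ofFn]
  have hFP : ∀ f : Fin (n + 1) → A,
      listMul (List.ofFn f) = listMul (List.ofFn fun i => f (σ i)) := fun f => hid f
  set J : ℕ := ((σ 0 : Fin (n+1)) : ℕ) with hJdef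
  have hJlt : J < n + 1 := (σ 0).isLt
  have hJ0 : J ≠ 0 := by
    intro h; apply hσ; ext; rw [Fin.val_zero]; exact h
  set B : Fin (n + 1) → A := fun i => if i = σ 0 then c * dv (σ 0) else dv i with hB
  have key1 : listMul (c :: List.ofFn dv) = listMul (List.ofFn B) := by
    rw [lm_cons c _ (by simp), hFP dv, List.ofFn_succ, ← lm_mulcons]
    have e5 : List.ofFn (fun i => B (σ i)) =
        (c * dv (σ 0)) :: List.ofFn (fun i : Fin n => dv (σ i.succ)) := by
      rw [List.ofFn_succ]
      congr 1
      · simp [hB]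
      · exact congrArg List.ofFn (funext fun i => by
          have hne : σ i.succ ≠ σ 0 := fun h => (Fin.succ_ne_zero i) (σ.injective h)
          simp [hB, hne])
    rw [← e5, ← hFP B]
  have key2 : List.ofFn B =
      (List.ofFn dv).take J ++ (c * dv (σ 0)) :: (List.ofFn dv).drop (J + 1) := by
    have hset : List.ofFn B = (List.ofFn dv).set J (c * dv (σ 0)) := by
      apply List.ext_getElem (by simp)
      intro i h1 h2
      have hi' : i < n + 1 := by simpa using h1
      simp only [List.getElem_ofFn, List.getElem_set, hB]
      by_cases hci : i = J
      · have hfin : (⟨i, hi'⟩ : Fin (n + 1)) = σ 0 := Fin.ext (by simpa [hJdef] using hci)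
        rw [if_pos hfin, if_pos hci.symm]
      · have hfin : (⟨i, hi'⟩ : Fin (n + 1)) ≠ σ 0 := fun h =>
          hci (by simpa [hJdef] using congrArg Fin.val h)
        rw [if_neg hfin, if_neg (fun h => hci h.symm)]
    rw [hset, List.set_eq_take_cons_drop _ (by simp [hJlt])]
  have key3 : dv (σ 0) :: (List.ofFn dv).drop (J + 1) = (List.ofFn dv).drop J := by
    have h1 : J < (List.ofFn dv).length := by simp [hJlt]
    have h2 : (List.ofFn dv)[J]'h1 = dv (σ 0) := by
      simp only [List.getElem_ofFn]
      rfl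
    rw [← h2]
    exact List.getElem_cons_drop h1
  calc listMul (c :: List.ofFn dv) = listMul (List.ofFn B) := key1
    _ = listMul ((List.ofFn dv).take J ++ (c * dv (σ 0)) :: (List.ofFn dv).drop (J + 1)) := by
        rw [key2]
    _ = listMul ((List.ofFn dv).take J ++ c :: dv (σ 0) :: (List.ofFn dv).drop (J + 1)) := by
        simpa using lm_glue c (dv (σ 0)) ((List.ofFn dv).drop (J + 1)) ((List.ofFn dv).take J) []
    _ = listMul ((List.ofFn dv).take J ++ c :: (List.ofFn dv).drop J) := by rw [key3]

private lemma lemD (u : List A) (c : A) (d : List A) (v : List A) (hd : d.length = n + 1) :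
    listMul (u ++ c :: d ++ v) =
      listMul (u ++ (d.take ((σ 0 : Fin (n+1)) : ℕ) ++ c :: d.drop ((σ 0 : Fin (n+1)) : ℕ)) ++ v) := by
  refine lm_ctx (by simp) (by simp) ?_ u v
  exact lemD_core n σ hσ hid c d hd

private lemma swap_aux (Q : List A) : ∀ (R T v : List A) (x y : A),
    Q.length + R.length = ((σ 0 : Fin (n+1)) : ℕ) → T.length = n + 1 - ((σ 0 : Fin (n+1)) : ℕ) →
    listMul (y :: (Q ++ x :: R ++ T ++ v)) = listMul (y :: (x :: R ++ Q ++ T ++ v)) := by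
  induction Q with
  | nil => intro R T v x y _ _; simp
  | cons c Q' ih =>
    intro R T v x y hQR hT
    set J : ℕ := ((σ 0 : Fin (n+1)) : ℕ) with hJdef
    have hlen : (Q' ++ x :: R).length = J := by
      simp only [List.length_append, List.length_cons, List.length_nil]
      simp only [List.length_cons] at hQR
      omega
    have hd : (Q' ++ x :: R ++ T).length = n + 1 := by
      have hJlt : J < n + 1 := (σ 0).isLt
      simp only [List.length_append, List.length_cons, List.length_nil] at hlen hT ⊢
      omega
    have step := lemD n σ hσ hid [y] c (Q' ++ x :: R ++ T) v hd
    have htake : (Q' ++ x :: R ++ T).take J = Q' ++ x :: R := by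
      rw [List.take_left' hlen]
    have hdrop : (Q' ++ x :: R ++ T).drop J = T := by
      rw [List.drop_left' hlen]
    rw [htake, hdrop] at step
    have e1 : [y] ++ c :: (Q' ++ x :: R ++ T) ++ v = y :: ((c :: Q') ++ x :: R ++ T ++ v) := by
      simp
    have e2 : [y] ++ (Q' ++ x :: R ++ c :: T) ++ v = y :: (Q' ++ x :: (R ++ [c]) ++ T ++ v) := by
      simp
    rw [e1, e2] at step
    rw [step, ih (R ++ [c]) T v x y
      (by simp only [List.length_append, List.length_cons, List.length_nil] at hQR ⊢; omega) hT]
    congr 1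
    simp

private lemma swap_front (x y : A) (S v : List A) (hS : S.length = n + 1) :
    listMul (x :: y :: S ++ v) = listMul (y :: x :: S ++ v) := by
  set J : ℕ := ((σ 0 : Fin (n+1)) : ℕ) with hJdef
  have hJlt : J < n + 1 := (σ 0).isLt
  have hJ0 : J ≠ 0 := by intro h; apply hσ; ext; rw [Fin.val_zero]; exact h
  obtain ⟨J', hJ'⟩ : ∃ J', J = J' + 1 := ⟨J - 1, by omega⟩
  cases S with
  | nil => simp at hS
  | cons s S₁ =>
    have hS₁ : S₁.length = n := by simpa using hS
    have glue1 : listMul (x :: y :: s :: S₁ ++ v) = listMul (x :: (y * s) :: S₁ ++ v) := by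
      have := lm_glue y s S₁ [x] v
      simpa using this.symm
    have hd : ((y * s) :: S₁).length = n + 1 := by simp [hS₁]
    have step := lemD n σ hσ hid [] x ((y * s) :: S₁) v hd
    have htake : ((y * s) :: S₁).take J = (y * s) :: S₁.take J' := by
      rw [hJ']; rfl
    have hdrop : ((y * s) :: S₁).drop J = S₁.drop J' := by
      rw [hJ']; rfl
    rw [htake, hdrop] at step
    have glue2 : listMul ((y * s) :: (S₁.take J' ++ x :: S₁.drop J') ++ v) =
        listMul (y :: s :: (S₁.take J' ++ x :: S₁.drop J') ++ v) := by
      simpa using lm_glue y s (S₁.take J' ++ x :: S₁.drop J') [] v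
    have hQlen : (s :: S₁.take J').length + ([] : List A).length = J := by
      have h1 : J' ≤ n := by omega
      simp [List.length_take, hS₁, h1, hJ']
    have hTlen : (S₁.drop J').length = n + 1 - J := by
      simp only [List.length_drop, hS₁]; omega
    have aux := swap_aux n σ hσ hid (s :: S₁.take J') [] (S₁.drop J') v x y hQlen hTlen
    calc listMul (x :: y :: s :: S₁ ++ v)
        = listMul (x :: (y * s) :: S₁ ++ v) := glue1
      _ = listMul ((y * s) :: (S₁.take J' ++ x :: S₁.drop J') ++ v) := by
          simpa using step
      _ = listMul (y :: s :: (S₁.take J' ++ x :: S₁.drop J') ++ v) := glue2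
      _ = listMul (y :: ((s :: S₁.take J') ++ x :: [] ++ S₁.drop J' ++ v)) := by
          congr 1; simp
      _ = listMul (y :: (x :: [] ++ (s :: S₁.take J') ++ S₁.drop J' ++ v)) := aux
      _ = listMul (y :: x :: s :: S₁ ++ v) := by
          congr 1; simp [List.take_append_drop]

private lemma perm_mul (l l' : List A) (h : l.Perm l') :
    ∀ v : List A, n + 1 ≤ v.length →
    listMul (l ++ v) = listMul (l' ++ v) := by
  induction h with
  | nil => intro v _; rfl
  | cons a h ih =>
    intro v hv
    have hv0 : v ≠ [] := by intro h0; subst h0; simp at hv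
    have h1 : ∀ w : List A, w ++ v ≠ [] := by
      intro w h0
      exact hv0 (List.append_eq_nil_iff.mp h0).2
    rw [List.cons_append, List.cons_append, lm_cons a _ (h1 _), lm_cons a _ (h1 _), ih v hv]
  | swap a b l =>
    intro v hv
    have hwlen : n + 1 ≤ (l ++ v).length := by simp; omega
    have hsplit : (l ++ v) = (l ++ v).take (n+1) ++ (l ++ v).drop (n+1) :=
      (List.take_append_drop _ _).symm
    have hlen : ((l ++ v).take (n+1)).length = n + 1 := by
      simp only [List.length_take]; omega
    have hsw := swap_front n σ hσ hid b a ((l ++ v).take (n+1)) ((l ++ v).drop (n+1)) hlen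
    calc listMul ((b :: a :: l) ++ v)
        = listMul (b :: a :: ((l ++ v).take (n+1) ++ (l ++ v).drop (n+1))) := by
          rw [← hsplit]; simp
      _ = listMul (a :: b :: ((l ++ v).take (n+1) ++ (l ++ v).drop (n+1))) := by
          simpa using hsw
      _ = listMul ((a :: b :: l) ++ v) := by rw [← hsplit]; simp
  | trans h1 h2 ih1 ih2 =>
    intro v hv
    exact (ih1 v hv).trans (ih2 v hv)

end core

end Latyshev

theorem latyshev {F A : Type*} [Field F] [NonUnitalRing A] [Module F A]
    [SMulCommClass F A A] [IsScalarTower F A A]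
    (n : ℕ) (σ : Equiv.Perm (Fin (n + 1))) (hσ : σ 0 ≠ 0)
    (hid : ∀ b : Fin (n + 1) → A, finProd b = finProd (fun i => b (σ i)))
    (k : ℕ) (hk : 0 < k) (τ : Equiv.Perm (Fin k)) (a : Fin (k + (n + 1)) → A) :
    finProd a =
      finProd (fun i : Fin k => a (Fin.castAdd (n + 1) (τ i))) *
        finProd (fun i : Fin (n + 1) => a (Fin.natAdd k i)) := by
  set g : Fin k → A := fun i => a (Fin.castAdd (n + 1) i) with hg
  set T : List A := List.ofFn (fun i : Fin (n + 1) => a (Fin.natAdd k i)) with hT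
  have hsplit : List.ofFn a = List.ofFn g ++ T := List.ofFn_add
  have hperm : (List.ofFn g).Perm (List.ofFn (g ∘ τ)) := (Equiv.Perm.ofFn_comp_perm τ g).symm
  have hTlen : n + 1 ≤ T.length := by simp [hT]
  have main : listMul (List.ofFn g ++ T) = listMul (List.ofFn (g ∘ τ) ++ T) :=
    perm_mul n σ hσ hid _ _ hperm T hTlen
  have hmul : listMul (List.ofFn (g ∘ τ) ++ T) = listMul (List.ofFn (g ∘ τ)) * listMul T := by
    refine lm_append _ ?_ _ ?_
    · simp only [ne_eq, List.ofFn_eq_nil_iff]; omega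
    · simp [hT, List.ofFn_eq_nil_iff]
  show listMul (List.ofFn a) = listMul (List.ofFn fun i => g (τ i)) * listMul T
  rw [hsplit, main, hmul]
  rfl
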